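/- For all z ≥ 0, φ(z)/(1 - Φ(z)) ≤ 2/(√(4+z²) - z) = (√(4+z²) + z)/2 ≤ 1 + z, where φ and Φ are the density and distribution function of the standard normal distribution. -/

import Mathlib

open Real

/-- The standard normal density. -/
noncomputable def stdNormalPDF (z : ℝ) : ℝ := (Real.sqrt (2 * π))⁻¹ * Real.exp (-z ^ 2 / 2)

/-- The standard normal cumulative distribution function. -/
noncomputable def stdNormalCDF (z : ℝ) : ℝ := ∫ u in Set.Iic z, stdNormalPDF u

section Aux
open MeasureTheory Filter

lemma pdf_pos (z : ℝ) : 0 < stdNormalPDF z := by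
  unfold stdNormalPDF
  have h : (0:ℝ) < Real.sqrt (2 * π) := Real.sqrt_pos.2 (by positivity)
  positivity

lemma pdf_cont : Continuous stdNormalPDF := by
  unfold stdNormalPDF; fun_prop

lemma pdf_integrable : MeasureTheory.Integrable stdNormalPDF := by
  have h := (integrable_exp_neg_mul_sq (b := (1:ℝ)/2) (by norm_num)).const_mul
    (Real.sqrt (2 * π))⁻¹
  convert h using 2 with x
  unfold stdNormalPDF
  ring_nf

lemma pdf_total : ∫ z, stdNormalPDF z = 1 := by
  have h : ∀ z : ℝ, stdNormalPDF z = (Real.sqrt (2 * π))⁻¹ * Real.exp (-(1/2) * z ^ 2) := by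
    intro z; unfold stdNormalPDF; ring_nf
  simp_rw [h]
  rw [MeasureTheory.integral_const_mul, integral_gaussian]
  have : π / (1/2 : ℝ) = 2 * π := by ring
  rw [this, inv_mul_cancel₀]
  exact ne_of_gt (Real.sqrt_pos.2 (by positivity))

lemma pdf_hasDeriv (z : ℝ) : HasDerivAt stdNormalPDF (-z * stdNormalPDF z) z := by
  have h1 : HasDerivAt (fun z : ℝ => -z ^ 2 / 2) (-z) z := by
    have := ((hasDerivAt_pow 2 z).neg).div_const 2
    norm_num at this
    exact this.congr_deriv (by ring)
  have h2 := (h1.exp).const_mul (Real.sqrt (2 * π))⁻¹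
  have : stdNormalPDF = fun z : ℝ => (Real.sqrt (2 * π))⁻¹ * Real.exp (-z ^ 2 / 2) := rfl
  rw [this]
  refine h2.congr_deriv ?_
  beta_reduce
  ring

lemma cdf_hasDeriv (z : ℝ) : HasDerivAt stdNormalCDF (stdNormalPDF z) z := by
  have hint : ∀ a : ℝ, MeasureTheory.IntegrableOn stdNormalPDF (Set.Iic a) :=
    fun a => pdf_integrable.integrableOn
  have key : ∀ a : ℝ, stdNormalCDF a = stdNormalCDF 0 + ∫ u in (0:ℝ)..a, stdNormalPDF u := by
    intro a
    have := intervalIntegral.integral_Iic_sub_Iic (hint 0) (hint a)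
    unfold stdNormalCDF
    linarith [this]
  have hd : HasDerivAt (fun a : ℝ => ∫ u in (0:ℝ)..a, stdNormalPDF u) (stdNormalPDF z) z :=
    intervalIntegral.integral_hasDerivAt_right (pdf_integrable.intervalIntegrable)
      (pdf_cont.stronglyMeasurable.stronglyMeasurableAtFilter) pdf_cont.continuousAt
  have := hd.const_add (stdNormalCDF 0)
  have heq : (fun a : ℝ => stdNormalCDF 0 + ∫ u in (0:ℝ)..a, stdNormalPDF u) = stdNormalCDF := by
    funext a; exact (key a).symm
  rwa [heq] at this

lemma cdf_tendsto : Tendsto stdNormalCDF atTop (nhds 1) := by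
  have := (MeasureTheory.aecover_Iic (μ := (volume : Measure ℝ))
    (tendsto_id (α := ℝ))).integral_tendsto_of_countably_generated pdf_integrable
  rwa [pdf_total] at this

end Aux

/-- **Birnbaum's inequality (Mills ratio bound).** For all `z ≥ 0`,
`φ(z)/(1 - Φ(z)) ≤ 2/(√(4+z²) - z) = (√(4+z²) + z)/2 ≤ 1 + z`. -/
theorem stmt2 (z : ℝ) (hz : 0 ≤ z) :
    stdNormalPDF z / (1 - stdNormalCDF z) ≤ 2 / (Real.sqrt (4 + z ^ 2) - z) ∧
    2 / (Real.sqrt (4 + z ^ 2) - z) = (Real.sqrt (4 + z ^ 2) + z) / 2 ∧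
    (Real.sqrt (4 + z ^ 2) + z) / 2 ≤ 1 + z := by
  have hs2 : Real.sqrt (4 + z ^ 2) ^ 2 = 4 + z ^ 2 := Real.sq_sqrt (by positivity)
  have hs_pos : 0 < Real.sqrt (4 + z ^ 2) := Real.sqrt_pos.2 (by positivity)
  have hsz : z < Real.sqrt (4 + z ^ 2) := by
    nlinarith [hs2, hs_pos]
  have heq : 2 / (Real.sqrt (4 + z ^ 2) - z) = (Real.sqrt (4 + z ^ 2) + z) / 2 := by
    rw [div_eq_div_iff (by linarith) (by norm_num)]
    nlinarith [hs2]
  have hthird : (Real.sqrt (4 + z ^ 2) + z) / 2 ≤ 1 + z := by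
    have h1 : Real.sqrt (4 + z ^ 2) ≤ 2 + z := by nlinarith [hs2, hs_pos]
    linarith
  refine ⟨?_, heq, hthird⟩
  -- Main Mills ratio bound
  set g : ℝ → ℝ := fun x => (Real.sqrt (4 + x ^ 2) - x) / 2 with hg_def
  set h : ℝ → ℝ := fun x => (1 - stdNormalCDF x) - stdNormalPDF x * g x with hh_def
  -- derivative of sqrt(4+x^2)
  have hsqx : ∀ x : ℝ, 0 < Real.sqrt (4 + x ^ 2) :=
    fun x => Real.sqrt_pos.2 (by positivity)
  have hsqx2 : ∀ x : ℝ, Real.sqrt (4 + x ^ 2) ^ 2 = 4 + x ^ 2 :=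
    fun x => Real.sq_sqrt (by positivity)
  have hsq : ∀ x : ℝ, HasDerivAt (fun x : ℝ => Real.sqrt (4 + x ^ 2))
      (x / Real.sqrt (4 + x ^ 2)) x := by
    intro x
    have h1 : HasDerivAt (fun x : ℝ => 4 + x ^ 2) (2 * x) x := by
      simpa using (hasDerivAt_pow 2 x).const_add 4
    have h2 := (Real.hasDerivAt_sqrt (by positivity : (4:ℝ) + x ^ 2 ≠ 0)).comp x h1
    exact h2.congr_deriv (by field_simp)
  have hg' : ∀ x : ℝ, HasDerivAt g ((x / Real.sqrt (4 + x ^ 2) - 1) / 2) x :=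
    fun x => (((hsq x).sub (hasDerivAt_id x)).div_const 2)
  set D : ℝ → ℝ := fun x => -(stdNormalPDF x) - ((-x * stdNormalPDF x) * g x +
      stdNormalPDF x * ((x / Real.sqrt (4 + x ^ 2) - 1) / 2)) with hD_def
  have hh' : ∀ x : ℝ, HasDerivAt h (D x) x := by
    intro x
    have h1 : HasDerivAt (fun x : ℝ => 1 - stdNormalCDF x) (-(stdNormalPDF x)) x := by
      exact ((hasDerivAt_const x (1:ℝ)).sub (cdf_hasDeriv x)).congr_deriv (by simp)
    exact h1.sub ((pdf_hasDeriv x).mul (hg' x))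
  have hD_nonpos : ∀ x : ℝ, 0 ≤ x → D x ≤ 0 := by
    intro x hx
    set sx := Real.sqrt (4 + x ^ 2) with hsx_def
    have hsp : 0 < sx := hsqx x
    have hsp2 : sx ^ 2 = 4 + x ^ 2 := hsqx2 x
    have hkey : x ^ 3 + 3 * x ≤ (x ^ 2 + 1) * sx := by
      have hA : 0 < (x ^ 2 + 1) * sx := by positivity
      have hAsq : ((x ^ 2 + 1) * sx) ^ 2 = (x ^ 3 + 3 * x) ^ 2 + 4 := by
        rw [mul_pow, hsp2]; ring
      nlinarith [hA, hAsq, (show (0:ℝ) ≤ x ^ 3 + 3 * x by positivity)]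
    have hE : x * sx - x ^ 2 - 1 - x / sx ≤ 0 := by
      have h2 : (x * sx - x ^ 2 - 1 - x / sx) * sx = x * sx ^ 2 - (x ^ 2 + 1) * sx - x := by
        field_simp
        ring
      rw [hsp2] at h2
      have h3 : (x * sx - x ^ 2 - 1 - x / sx) * sx ≤ 0 * sx := by
        rw [h2]; nlinarith [hkey]
      exact le_of_mul_le_mul_right h3 hsp
    have hDx : D x = stdNormalPDF x * ((x * sx - x ^ 2 - 1 - x / sx) / 2) := by
      simp only [hD_def, hg_def]
      ring
    rw [hDx]
    exact mul_nonpos_of_nonneg_of_nonpos (pdf_pos x).le (by linarith)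
  -- h is antitone on [z, ∞)
  have hcont : Continuous h := by
    have : Differentiable ℝ h := fun x => (hh' x).differentiableAt
    exact this.continuous
  have hanti : AntitoneOn h (Set.Ici z) := by
    apply antitoneOn_of_deriv_nonpos (convex_Ici z) hcont.continuousOn
    · intro x hx
      exact (hh' x).differentiableAt.differentiableWithinAt
    · intro x hx
      rw [interior_Ici] at hx
      rw [(hh' x).deriv]
      exact hD_nonpos x (le_of_lt (lt_of_le_of_lt hz hx))
  -- limits
  have ht1 : Filter.Tendsto (fun x => 1 - stdNormalCDF x) Filter.atTop (nhds 0) := by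
    have := (tendsto_const_nhds (x := (1:ℝ)) (f := Filter.atTop)).sub cdf_tendsto
    simpa using this
  have hpdf_t : Filter.Tendsto stdNormalPDF Filter.atTop (nhds 0) := by
    have h1 : Filter.Tendsto (fun x : ℝ => -x ^ 2 / 2) Filter.atTop Filter.atBot := by
      have hp : Filter.Tendsto (fun x : ℝ => x ^ 2) Filter.atTop Filter.atTop :=
        Filter.tendsto_pow_atTop two_ne_zero
      have hn := Filter.tendsto_neg_atTop_atBot.comp hp
      have := hn.atBot_div_const (by norm_num : (0:ℝ) < 2)
      simpa [Function.comp] using this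
    have h2 := Real.tendsto_exp_atBot.comp h1
    have h3 := h2.const_mul (Real.sqrt (2 * π))⁻¹
    rw [mul_zero] at h3
    exact h3
  have ht2 : Filter.Tendsto (fun x => stdNormalPDF x * g x) Filter.atTop (nhds 0) := by
    apply squeeze_zero' (g := stdNormalPDF)
    · filter_upwards [Filter.eventually_ge_atTop (0:ℝ)] with x hx
      have : x < Real.sqrt (4 + x ^ 2) := by nlinarith [hsqx2 x, hsqx x]
      have hgx : 0 ≤ g x := by simp only [hg_def]; linarith
      exact mul_nonneg (pdf_pos x).le hgx
    · filter_upwards [Filter.eventually_ge_atTop (0:ℝ)] with x hx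
      have hsle : Real.sqrt (4 + x ^ 2) ≤ 2 + x := by nlinarith [hsqx2 x, hsqx x]
      have hgx : g x ≤ 1 := by simp only [hg_def]; linarith
      calc stdNormalPDF x * g x ≤ stdNormalPDF x * 1 :=
            mul_le_mul_of_nonneg_left hgx (pdf_pos x).le
        _ = stdNormalPDF x := mul_one _
    · exact hpdf_t
  have hht : Filter.Tendsto h Filter.atTop (nhds 0) := by
    have := ht1.sub ht2
    simpa [hh_def] using this
  have hz0 : 0 ≤ h z := by
    apply le_of_tendsto hht
    filter_upwards [Filter.eventually_ge_atTop z] with x hx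
    exact hanti (Set.self_mem_Ici) (Set.mem_Ici.2 hx) hx
  -- conclude
  have hgz : 0 < g z := by simp only [hg_def]; linarith
  have hmain : stdNormalPDF z * g z ≤ 1 - stdNormalCDF z := by
    have : h z = (1 - stdNormalCDF z) - stdNormalPDF z * g z := rfl
    linarith [hz0, this.symm.le]
  have hpos : 0 < 1 - stdNormalCDF z := lt_of_lt_of_le (mul_pos (pdf_pos z) hgz) hmain
  rw [div_le_div_iff₀ hpos (by linarith : (0:ℝ) < Real.sqrt (4 + z ^ 2) - z)]
  have hgz_eq : g z = (Real.sqrt (4 + z ^ 2) - z) / 2 := rfl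
  nlinarith [hmain, hgz_eq, (pdf_pos z).le]
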